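/- arXiv:1706.09999 — 2 statements merged into one kernel-verified Lean document; each statement's English description precedes it below -/
import Mathlib

section
/- Let W be a module over U(gl(V)) and M a module over U(q(V)) (for q = q(n) ⊂ gl(V) as above), and let Ω = Σ_{1≤i,j≤n} (ẽ_{i,j}^0 ⊗ e_{j,i}^0 + ẽ_{i,j}^1 ⊗ e_{j,i}^1) ∈ U(gl) ⊗ U(q). Then the map W ⊗ M → W ⊗ M given by w ⊗ m ↦ Σ_{i,j} ẽ_{i,j}^0.w ⊗ e_{j,i}^0.m + (-1)^{|w|} ẽ_{i,j}^1.w ⊗ e_{j,i}^1.m is an even homomorphism of U(q)-supermodules, where W ⊗ M carries the U(q)-action via the coproduct x.(w⊗m) = x.w ⊗ m + (-1)^{|x||w|} w ⊗ x.m. -/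
open Matrix
open scoped TensorProduct

namespace CasimirQ

/-- Index set for the homogeneous basis of the natural supermodule of `gl(n|n)`:
even indices `Sum.inl i` and odd indices `Sum.inr i` (`ī`). -/
abbrev I (n : ℕ) := Fin n ⊕ Fin n

/-- The parity-preserving (even) part of a matrix in `gl(V)`. -/
def evenPart {k : Type*} [Zero k] {n : ℕ} (x : Matrix (I n) (I n) k) :
    Matrix (I n) (I n) k :=
  Matrix.of fun a b => if a.isLeft = b.isLeft then x a b else 0

/-- The parity-reversing (odd) part of a matrix in `gl(V)`. -/
def oddPart {k : Type*} [Zero k] {n : ℕ} (x : Matrix (I n) (I n) k) :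
    Matrix (I n) (I n) k :=
  Matrix.of fun a b => if a.isLeft = b.isLeft then 0 else x a b

/-- `x` is homogeneous of parity `ε`. -/
def IsHomog {k : Type*} [Zero k] {n : ℕ} (x : Matrix (I n) (I n) k) (ε : ZMod 2) :
    Prop :=
  (ε = 0 ∧ oddPart x = 0) ∨ (ε = 1 ∧ evenPart x = 0)

/-- The basis `e_{i,j}^ε` of `q(n) ⊂ gl(n|n)`:
`e_{i,j}^0 = e_{i,j} + e_{ī,j̄}` and `e_{i,j}^1 = e_{ī,j} + e_{i,j̄}`. -/
def eMat {k : Type*} [Ring k] {n : ℕ} (ε : ZMod 2) (i j : Fin n) :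
    Matrix (I n) (I n) k :=
  if ε = 0 then
    Matrix.single (Sum.inl i) (Sum.inl j) 1 + Matrix.single (Sum.inr i) (Sum.inr j) 1
  else
    Matrix.single (Sum.inr i) (Sum.inl j) 1 + Matrix.single (Sum.inl i) (Sum.inr j) 1

/-- The complementary elements `ẽ_{i,j}^ε` of `gl(n|n)`:
`ẽ_{i,j}^0 = e_{i,j} − e_{ī,j̄}` and `ẽ_{i,j}^1 = e_{ī,j} − e_{i,j̄}`. -/
def etMat {k : Type*} [Ring k] {n : ℕ} (ε : ZMod 2) (i j : Fin n) :
    Matrix (I n) (I n) k :=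
  if ε = 0 then
    Matrix.single (Sum.inl i) (Sum.inl j) 1 - Matrix.single (Sum.inr i) (Sum.inr j) 1
  else
    Matrix.single (Sum.inr i) (Sum.inl j) 1 - Matrix.single (Sum.inl i) (Sum.inr j) 1

section Super

variable (k : Type*) [Field k]
variable (U₀ U₁ : Type*) [AddCommGroup U₀] [Module k U₀] [AddCommGroup U₁] [Module k U₁]

/-- Projection of the superspace `U₀ × U₁` onto its even part. -/
def p0 : (U₀ × U₁) →ₗ[k] (U₀ × U₁) :=
  (LinearMap.inl k U₀ U₁).comp (LinearMap.fst k U₀ U₁)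

/-- Projection of the superspace `U₀ × U₁` onto its odd part. -/
def p1 : (U₀ × U₁) →ₗ[k] (U₀ × U₁) :=
  (LinearMap.inr k U₀ U₁).comp (LinearMap.snd k U₀ U₁)

/-- The parity involution `u ↦ (-1)^{|u|} u` of the superspace `U₀ × U₁`. -/
def sigma : (U₀ × U₁) →ₗ[k] (U₀ × U₁) :=
  p0 k U₀ U₁ + (-1 : k) • p1 k U₀ U₁

/-- An operator on the superspace `U₀ × U₁` is even if it preserves parities. -/
def IsEvenOp (T : (U₀ × U₁) →ₗ[k] (U₀ × U₁)) : Prop :=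
  (p1 k U₀ U₁) ∘ₗ T ∘ₗ (p0 k U₀ U₁) = 0 ∧ (p0 k U₀ U₁) ∘ₗ T ∘ₗ (p1 k U₀ U₁) = 0

/-- An operator on the superspace `U₀ × U₁` is odd if it reverses parities. -/
def IsOddOp (T : (U₀ × U₁) →ₗ[k] (U₀ × U₁)) : Prop :=
  (p0 k U₀ U₁) ∘ₗ T ∘ₗ (p0 k U₀ U₁) = 0 ∧ (p1 k U₀ U₁) ∘ₗ T ∘ₗ (p1 k U₀ U₁) = 0

end Super

section AuxLemmas

lemma CQzmod2_cases (ε : ZMod 2) : ε = 0 ∨ ε = 1 := by revert ε; decide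

section MatLemmas
variable {k : Type*} [Ring k] {n : ℕ}

lemma CQstd_mul (a b c d : I n) :
    Matrix.single a b (1:k) * Matrix.single c d 1 =
      if b = c then Matrix.single a d 1 else 0 := by
  split_ifs with h
  · subst h; rw [single_mul_single_same, one_mul]
  · exact Matrix.single_mul_single_of_ne (h := h) ..

lemma CQzmod_add : (1:ZMod 2) + 1 = 0 := by decide

lemma eMat_mul_eMat (ε ε' : ZMod 2) (i j p q : Fin n) :
    (eMat ε i j : Matrix (I n) (I n) k) * eMat ε' p q =
      if j = p then eMat (ε + ε') i q else 0 := by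
  by_cases h : j = p
  · subst h
    rcases CQzmod2_cases ε with h1 | h1 <;> rcases CQzmod2_cases ε' with h2 | h2 <;>
      subst h1 <;> subst h2 <;>
      simp [eMat, add_mul, mul_add, CQzmod_add] <;> abel
  · rcases CQzmod2_cases ε with h1 | h1 <;> rcases CQzmod2_cases ε' with h2 | h2 <;>
      subst h1 <;> subst h2 <;>
      simp [eMat, add_mul, mul_add, h]

lemma eMat_mul_etMat (ε δ : ZMod 2) (i j p q : Fin n) :
    (eMat ε i j : Matrix (I n) (I n) k) * etMat δ p q =
      if j = p then etMat (ε + δ) i q else 0 := by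
  by_cases h : j = p
  · subst h
    rcases CQzmod2_cases ε with h1 | h1 <;> rcases CQzmod2_cases δ with h2 | h2 <;>
      subst h1 <;> subst h2 <;>
      simp [eMat, etMat, add_mul, mul_sub, CQzmod_add] <;> abel
  · rcases CQzmod2_cases ε with h1 | h1 <;> rcases CQzmod2_cases δ with h2 | h2 <;>
      subst h1 <;> subst h2 <;>
      simp [eMat, etMat, add_mul, mul_sub, h]

lemma etMat_mul_eMat (δ ε : ZMod 2) (p q i j : Fin n) :
    (etMat δ p q : Matrix (I n) (I n) k) * eMat ε i j =
      if q = i then ((-1 : k) ^ ε.val) • etMat (δ + ε) p j else 0 := by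
  by_cases h : q = i
  · subst h
    rcases CQzmod2_cases δ with h1 | h1 <;> rcases CQzmod2_cases ε with h2 | h2 <;>
      subst h1 <;> subst h2 <;>
      simp [eMat, etMat, sub_mul, mul_add, CQzmod_add, smul_sub, ZMod.val_one,
        smul_single] <;> abel
  · rcases CQzmod2_cases δ with h1 | h1 <;> rcases CQzmod2_cases ε with h2 | h2 <;>
      subst h1 <;> subst h2 <;>
      simp [eMat, etMat, sub_mul, mul_add, h]

lemma CQoddPart_eMat0 (i j : Fin n) : oddPart (eMat 0 i j : Matrix (I n) (I n) k) = 0 := by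
  ext a b
  rcases a with a | a <;> rcases b with b | b <;>
    simp [oddPart, eMat, Matrix.single, Matrix.of_apply]

lemma CQevenPart_eMat1 (i j : Fin n) : evenPart (eMat 1 i j : Matrix (I n) (I n) k) = 0 := by
  ext a b
  rcases a with a | a <;> rcases b with b | b <;>
    simp [evenPart, eMat, Matrix.single, Matrix.of_apply]

lemma CQoddPart_etMat0 (i j : Fin n) : oddPart (etMat 0 i j : Matrix (I n) (I n) k) = 0 := by
  ext a b
  rcases a with a | a <;> rcases b with b | b <;>
    simp [oddPart, etMat, Matrix.single, Matrix.of_apply]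

lemma CQevenPart_etMat1 (i j : Fin n) : evenPart (etMat 1 i j : Matrix (I n) (I n) k) = 0 := by
  ext a b
  rcases a with a | a <;> rcases b with b | b <;>
    simp [evenPart, etMat, Matrix.single, Matrix.of_apply]

lemma CQisHomog_eMat (ε : ZMod 2) (i j : Fin n) :
    IsHomog (eMat ε i j : Matrix (I n) (I n) k) ε := by
  rcases CQzmod2_cases ε with h | h <;> subst h
  · exact Or.inl ⟨rfl, CQoddPart_eMat0 i j⟩
  · exact Or.inr ⟨rfl, CQevenPart_eMat1 i j⟩

lemma CQisHomog_etMat (ε : ZMod 2) (i j : Fin n) :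
    IsHomog (etMat ε i j : Matrix (I n) (I n) k) ε := by
  rcases CQzmod2_cases ε with h | h <;> subst h
  · exact Or.inl ⟨rfl, CQoddPart_etMat0 i j⟩
  · exact Or.inr ⟨rfl, CQevenPart_etMat1 i j⟩

end MatLemmas

section SuperLemmas
variable {k : Type*} [Field k]
variable {U₀ U₁ : Type*} [AddCommGroup U₀] [Module k U₀] [AddCommGroup U₁] [Module k U₁]

lemma CQsigma_apply (x : U₀ × U₁) : sigma k U₀ U₁ x = (x.1, -x.2) := by
  simp [sigma, p0, p1, Prod.ext_iff]

lemma CQsigma_comp_sigma : sigma k U₀ U₁ ∘ₗ sigma k U₀ U₁ = LinearMap.id := by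
  ext x <;> simp [CQsigma_apply]

lemma CQeven_sigma_comm {T : (U₀ × U₁) →ₗ[k] (U₀ × U₁)} (h : IsEvenOp k U₀ U₁ T) :
    sigma k U₀ U₁ ∘ₗ T = T ∘ₗ sigma k U₀ U₁ := by
  obtain ⟨h1, h2⟩ := h
  apply LinearMap.ext; intro x
  have e1 := LinearMap.congr_fun h1 x
  have e2 := LinearMap.congr_fun h2 x
  simp only [LinearMap.comp_apply, LinearMap.zero_apply, p0, p1, LinearMap.coe_comp,
    Function.comp_apply, LinearMap.fst_apply, LinearMap.snd_apply, LinearMap.inl_apply,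
    LinearMap.inr_apply, Prod.ext_iff] at e1 e2
  have hu2 : (T (x.1, (0:U₁))).2 = 0 := e1.2
  have hv1 : (T ((0:U₀), x.2)).1 = 0 := e2.1
  have hTx : T x = T (x.1, (0:U₁)) + T ((0:U₀), x.2) := by
    rw [← map_add]; congr 1; simp [Prod.ext_iff]
  have hTsx : T (sigma k U₀ U₁ x) = T (x.1, (0:U₁)) - T ((0:U₀), x.2) := by
    rw [← map_sub, CQsigma_apply]; congr 1; simp [Prod.ext_iff]
  rw [LinearMap.comp_apply, LinearMap.comp_apply, hTsx, CQsigma_apply, hTx]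
  simp [Prod.ext_iff, hu2, hv1]

lemma CQodd_sigma_anticomm {T : (U₀ × U₁) →ₗ[k] (U₀ × U₁)} (h : IsOddOp k U₀ U₁ T) :
    sigma k U₀ U₁ ∘ₗ T = -(T ∘ₗ sigma k U₀ U₁) := by
  obtain ⟨h1, h2⟩ := h
  apply LinearMap.ext; intro x
  have e1 := LinearMap.congr_fun h1 x
  have e2 := LinearMap.congr_fun h2 x
  simp only [LinearMap.comp_apply, LinearMap.zero_apply, p0, p1, LinearMap.coe_comp,
    Function.comp_apply, LinearMap.fst_apply, LinearMap.snd_apply, LinearMap.inl_apply,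
    LinearMap.inr_apply, Prod.ext_iff] at e1 e2
  have hu1 : (T (x.1, (0:U₁))).1 = 0 := e1.1
  have hv2 : (T ((0:U₀), x.2)).2 = 0 := e2.2
  have hTx : T x = T (x.1, (0:U₁)) + T ((0:U₀), x.2) := by
    rw [← map_add]; congr 1; simp [Prod.ext_iff]
  have hTsx : T (sigma k U₀ U₁ x) = T (x.1, (0:U₁)) - T ((0:U₀), x.2) := by
    rw [← map_sub, CQsigma_apply]; congr 1; simp [Prod.ext_iff]
  rw [LinearMap.comp_apply, LinearMap.neg_apply, LinearMap.comp_apply, hTsx,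
    CQsigma_apply, hTx]
  simp [Prod.ext_iff, hu1, hv2]

end SuperLemmas

section TensorLemmas
variable {k : Type*} [CommRing k]
variable {W M : Type*} [AddCommGroup W] [Module k W] [AddCommGroup M] [Module k M]

open TensorProduct

lemma CQmap_sub_left (f f' : W →ₗ[k] W) (g : M →ₗ[k] M) :
    TensorProduct.map (f - f') g = TensorProduct.map f g - TensorProduct.map f' g := by
  rw [sub_eq_add_neg, ← neg_one_smul k f', TensorProduct.map_add_left,
    TensorProduct.map_smul_left]
  module

lemma CQmap_sub_right (f : W →ₗ[k] W) (g g' : M →ₗ[k] M) :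
    TensorProduct.map f (g - g') = TensorProduct.map f g - TensorProduct.map f g' := by
  rw [sub_eq_add_neg, ← neg_one_smul k g', TensorProduct.map_add_right,
    TensorProduct.map_smul_right]
  module

lemma CQmap_neg_left (f : W →ₗ[k] W) (g : M →ₗ[k] M) :
    TensorProduct.map (-f) g = -TensorProduct.map f g := by
  rw [← neg_one_smul k f, TensorProduct.map_smul_left]
  module

lemma CQmap_neg_right (f : W →ₗ[k] W) (g : M →ₗ[k] M) :
    TensorProduct.map f (-g) = -TensorProduct.map f g := by
  rw [← neg_one_smul k g, TensorProduct.map_smul_right]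
  module

lemma CQite_map_left (c : Prop) [Decidable c] (f : W →ₗ[k] W) (g : M →ₗ[k] M) :
    TensorProduct.map (if c then f else 0) g =
      if c then TensorProduct.map f g else 0 := by
  split_ifs <;> simp [TensorProduct.map_zero_left]

lemma CQite_map_right (c : Prop) [Decidable c] (f : W →ₗ[k] W) (g : M →ₗ[k] M) :
    TensorProduct.map f (if c then g else 0) =
      if c then TensorProduct.map f g else 0 := by
  split_ifs <;> simp [TensorProduct.map_zero_right]

lemma CQite_comp (c : Prop) [Decidable c] (f g : W →ₗ[k] W) :
    (if c then f else 0) ∘ₗ g = if c then f ∘ₗ g else 0 := by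
  split_ifs <;> simp

end TensorLemmas

section SumLemmas
variable {k : Type*} [CommRing k] {A B C : Type*}
  [AddCommGroup A] [Module k A] [AddCommGroup B] [Module k B] [AddCommGroup C] [Module k C]

lemma CQsum_comp {ι : Type*} (s : Finset ι) (g : ι → B →ₗ[k] C) (f : A →ₗ[k] B) :
    (∑ x ∈ s, g x) ∘ₗ f = ∑ x ∈ s, (g x ∘ₗ f) := by
  ext a; simp [LinearMap.sum_apply]

lemma CQcomp_sum {ι : Type*} (s : Finset ι) (f : B →ₗ[k] C) (g : ι → A →ₗ[k] B) :
    f ∘ₗ (∑ x ∈ s, g x) = ∑ x ∈ s, (f ∘ₗ g x) := by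
  ext a; simp [LinearMap.sum_apply, map_sum]

end SumLemmas
end AuxLemmas
section CoreLemmas
variable {k : Type*} [CommRing k]
variable {W M : Type*} [AddCommGroup W] [Module k W] [AddCommGroup M] [Module k M]

open TensorProduct

/-- Even-generator case. -/
lemma CQmain0 {n : ℕ} (i j : Fin n) (σW : W →ₗ[k] W)
    (A0 A1 : Fin n → Fin n → W →ₗ[k] W) (B0 B1 : Fin n → Fin n → M →ₗ[k] M)
    (X : W →ₗ[k] W) (Y : M →ₗ[k] M)
    (hσX : σW ∘ₗ X = X ∘ₗ σW)
    (hW0 : ∀ p q, A0 p q ∘ₗ X - X ∘ₗ A0 p q =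
      (if q = i then A0 p j else 0) - (if j = p then A0 i q else 0))
    (hW1 : ∀ p q, A1 p q ∘ₗ X - X ∘ₗ A1 p q =
      (if q = i then A1 p j else 0) - (if j = p then A1 i q else 0))
    (hM0 : ∀ q p, B0 q p ∘ₗ Y - Y ∘ₗ B0 q p =
      (if p = i then B0 q j else 0) - (if j = q then B0 i p else 0))
    (hM1 : ∀ q p, B1 q p ∘ₗ Y - Y ∘ₗ B1 q p =
      (if p = i then B1 q j else 0) - (if j = q then B1 i p else 0)) :
    (∑ p : Fin n, ∑ q : Fin n,
        (TensorProduct.map (A0 p q) (B0 q p) +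
         TensorProduct.map (A1 p q ∘ₗ σW) (B1 q p))) ∘ₗ
      (TensorProduct.map X LinearMap.id + TensorProduct.map LinearMap.id Y)
    = (TensorProduct.map X LinearMap.id + TensorProduct.map LinearMap.id Y) ∘ₗ
      (∑ p : Fin n, ∑ q : Fin n,
        (TensorProduct.map (A0 p q) (B0 q p) +
         TensorProduct.map (A1 p q ∘ₗ σW) (B1 q p))) := by
  rw [← sub_eq_zero, CQsum_comp, CQcomp_sum]
  simp only [CQsum_comp, CQcomp_sum, ← Finset.sum_sub_distrib]
  have expand : ∀ p q : Fin n,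
      (TensorProduct.map (A0 p q) (B0 q p) +
       TensorProduct.map (A1 p q ∘ₗ σW) (B1 q p)) ∘ₗ
        (TensorProduct.map X LinearMap.id + TensorProduct.map LinearMap.id Y) -
      (TensorProduct.map X LinearMap.id + TensorProduct.map LinearMap.id Y) ∘ₗ
        (TensorProduct.map (A0 p q) (B0 q p) +
         TensorProduct.map (A1 p q ∘ₗ σW) (B1 q p))
      = TensorProduct.map
          ((if q = i then A0 p j else 0) - (if j = p then A0 i q else 0)) (B0 q p)
      + TensorProduct.map (A0 p q)
          ((if p = i then B0 q j else 0) - (if j = q then B0 i p else 0))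
      + TensorProduct.map
          (((if q = i then A1 p j else 0) - (if j = p then A1 i q else 0)) ∘ₗ σW) (B1 q p)
      + TensorProduct.map (A1 p q ∘ₗ σW)
          ((if p = i then B1 q j else 0) - (if j = q then B1 i p else 0)) := by
    intro p q
    rw [← hW0 p q, ← hW1 p q, ← hM0 q p, ← hM1 q p]
    simp only [LinearMap.add_comp, LinearMap.comp_add, ← TensorProduct.map_comp,
      LinearMap.comp_id, LinearMap.id_comp, CQmap_sub_left, CQmap_sub_right,
      LinearMap.sub_comp, LinearMap.comp_assoc, hσX]
    abel
  rw [Finset.sum_congr rfl fun p _ => Finset.sum_congr rfl fun q _ => expand p q]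
  simp only [LinearMap.sub_comp, CQite_comp, LinearMap.zero_comp, CQmap_sub_left,
    CQmap_sub_right, CQite_map_left, CQite_map_right, Finset.sum_add_distrib,
    Finset.sum_sub_distrib, Finset.sum_ite_irrel, Finset.sum_const_zero,
    Finset.sum_ite_eq, Finset.sum_ite_eq', Finset.mem_univ, if_true]
  abel
end CoreLemmas
section CoreLemmas1
variable {k : Type*} [CommRing k]
variable {W M : Type*} [AddCommGroup W] [Module k W] [AddCommGroup M] [Module k M]

open TensorProduct

/-- Odd-generator case. -/
lemma CQmain1 {n : ℕ} (i j : Fin n) (σW : W →ₗ[k] W)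
    (A0 A1 : Fin n → Fin n → W →ₗ[k] W) (B0 B1 : Fin n → Fin n → M →ₗ[k] M)
    (X : W →ₗ[k] W) (Y : M →ₗ[k] M)
    (hσσ : σW ∘ₗ σW = LinearMap.id)
    (hσX : σW ∘ₗ X = -(X ∘ₗ σW))
    (hσA0 : ∀ p q, σW ∘ₗ A0 p q = A0 p q ∘ₗ σW)
    (hσA1 : ∀ p q, σW ∘ₗ A1 p q = -(A1 p q ∘ₗ σW))
    (hW0 : ∀ p q, A0 p q ∘ₗ X - X ∘ₗ A0 p q =
      -(if q = i then A1 p j else 0) - (if j = p then A1 i q else 0))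
    (hW1 : ∀ p q, A1 p q ∘ₗ X + X ∘ₗ A1 p q =
      -(if q = i then A0 p j else 0) + (if j = p then A0 i q else 0))
    (hM0 : ∀ q p, B0 q p ∘ₗ Y - Y ∘ₗ B0 q p =
      (if p = i then B1 q j else 0) - (if j = q then B1 i p else 0))
    (hM1 : ∀ q p, B1 q p ∘ₗ Y + Y ∘ₗ B1 q p =
      (if p = i then B0 q j else 0) + (if j = q then B0 i p else 0)) :
    (∑ p : Fin n, ∑ q : Fin n,
        (TensorProduct.map (A0 p q) (B0 q p) +
         TensorProduct.map (A1 p q ∘ₗ σW) (B1 q p))) ∘ₗ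
      (TensorProduct.map X LinearMap.id + TensorProduct.map σW Y)
    = (TensorProduct.map X LinearMap.id + TensorProduct.map σW Y) ∘ₗ
      (∑ p : Fin n, ∑ q : Fin n,
        (TensorProduct.map (A0 p q) (B0 q p) +
         TensorProduct.map (A1 p q ∘ₗ σW) (B1 q p))) := by
  have hσA1' : ∀ p q, σW ∘ₗ (A1 p q ∘ₗ σW) = -A1 p q := by
    intro p q
    rw [← LinearMap.comp_assoc, hσA1, LinearMap.neg_comp, LinearMap.comp_assoc, hσσ,
      LinearMap.comp_id]
  have hσσ' : ∀ p q, A1 p q ∘ₗ (σW ∘ₗ σW) = A1 p q := by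
    intro p q; rw [hσσ, LinearMap.comp_id]
  rw [← sub_eq_zero, CQsum_comp, CQcomp_sum]
  simp only [CQsum_comp, CQcomp_sum, ← Finset.sum_sub_distrib]
  have expand : ∀ p q : Fin n,
      (TensorProduct.map (A0 p q) (B0 q p) +
       TensorProduct.map (A1 p q ∘ₗ σW) (B1 q p)) ∘ₗ
        (TensorProduct.map X LinearMap.id + TensorProduct.map σW Y) -
      (TensorProduct.map X LinearMap.id + TensorProduct.map σW Y) ∘ₗ
        (TensorProduct.map (A0 p q) (B0 q p) +
         TensorProduct.map (A1 p q ∘ₗ σW) (B1 q p))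
      = TensorProduct.map
          (-(if q = i then A1 p j else 0) - (if j = p then A1 i q else 0)) (B0 q p)
      + TensorProduct.map (A0 p q ∘ₗ σW)
          ((if p = i then B1 q j else 0) - (if j = q then B1 i p else 0))
      - TensorProduct.map
          ((-(if q = i then A0 p j else 0) + (if j = p then A0 i q else 0)) ∘ₗ σW) (B1 q p)
      + TensorProduct.map (A1 p q)
          ((if p = i then B0 q j else 0) + (if j = q then B0 i p else 0)) := by
    intro p q
    rw [← hW0 p q, ← hW1 p q, ← hM0 q p, ← hM1 q p]
    simp only [LinearMap.add_comp, LinearMap.comp_add, LinearMap.sub_comp,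
      LinearMap.comp_sub, LinearMap.neg_comp, LinearMap.comp_neg,
      ← TensorProduct.map_comp, LinearMap.comp_id, LinearMap.id_comp,
      LinearMap.comp_assoc, hσX, hσA0, hσA1, hσA1', hσσ', TensorProduct.map_add_left, TensorProduct.map_add_right,
      CQmap_sub_left, CQmap_sub_right, CQmap_neg_left, CQmap_neg_right]
    abel
  rw [Finset.sum_congr rfl fun p _ => Finset.sum_congr rfl fun q _ => expand p q]
  simp only [LinearMap.sub_comp, LinearMap.add_comp, LinearMap.neg_comp, CQite_comp,
    LinearMap.zero_comp, CQmap_sub_left, CQmap_sub_right, CQmap_neg_left,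
    TensorProduct.map_add_left, TensorProduct.map_add_right,
    CQite_map_left, CQite_map_right, Finset.sum_add_distrib,
    Finset.sum_sub_distrib, Finset.sum_neg_distrib, Finset.sum_ite_irrel,
    Finset.sum_const_zero, Finset.sum_ite_eq, Finset.sum_ite_eq', Finset.mem_univ, if_true]
  abel
end CoreLemmas1

/-- Let `W` be a `U(gl)`-supermodule (given by a superrepresentation `ρW`
of the Lie superalgebra `gl(n|n)` of matrices), `M` a `U(q)`-supermodule (given by a
superrepresentation `ρM` of `q(n)`, specified on the basis `e_{i,j}^ε`), and
`Ω = Σ_{i,j} ẽ_{i,j}^0 ⊗ e_{j,i}^0 + ẽ_{i,j}^1 ⊗ e_{j,i}^1` the Casimir element.  Then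
the operator `w ⊗ m ↦ Σ_{i,j} ẽ_{i,j}^0.w ⊗ e_{j,i}^0.m + (-1)^{|w|} ẽ_{i,j}^1.w ⊗
e_{j,i}^1.m` on `W ⊗ M` is an even homomorphism of `U(q)`-supermodules: it commutes
with the diagonal action `x.(w⊗m) = x.w ⊗ m + (-1)^{|x||w|} w ⊗ x.m` of every basis
element `x = e_{i,j}^ε` of `q(n)`. -/
theorem casimir_is_supermodule_hom
    (k : Type*) [Field k] (h2 : (2 : k) ≠ 0) (s : k) (hs : s ^ 2 = -1) (n : ℕ)
    (W₀ W₁ M₀ M₁ : Type*)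
    [AddCommGroup W₀] [Module k W₀] [AddCommGroup W₁] [Module k W₁]
    [AddCommGroup M₀] [Module k M₀] [AddCommGroup M₁] [Module k M₁]
    (ρW : Matrix (I n) (I n) k →ₗ[k] ((W₀ × W₁) →ₗ[k] (W₀ × W₁)))
    (ρM : Matrix (I n) (I n) k →ₗ[k] ((M₀ × M₁) →ₗ[k] (M₀ × M₁)))
    -- `ρW` is a superrepresentation of the Lie superalgebra `gl(n|n)`:
    (hWeven : ∀ x : Matrix (I n) (I n) k, oddPart x = 0 → IsEvenOp k W₀ W₁ (ρW x))
    (hWodd : ∀ x : Matrix (I n) (I n) k, evenPart x = 0 → IsOddOp k W₀ W₁ (ρW x))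
    (hWrep : ∀ (ε ε' : ZMod 2) (x y : Matrix (I n) (I n) k),
      IsHomog x ε → IsHomog y ε' →
      ρW (x * y - ((-1 : k) ^ ((ε * ε').val)) • (y * x)) =
        ρW x ∘ₗ ρW y - ((-1 : k) ^ ((ε * ε').val)) • (ρW y ∘ₗ ρW x))
    -- `ρM` is a superrepresentation of `q(n)` (specified on the basis `e_{i,j}^ε`):
    (hMeven : ∀ i j : Fin n, IsEvenOp k M₀ M₁ (ρM (eMat 0 i j)))
    (hModd : ∀ i j : Fin n, IsOddOp k M₀ M₁ (ρM (eMat 1 i j)))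
    (hMrep : ∀ (ε ε' : ZMod 2) (i j p q : Fin n),
      ρM (eMat ε i j * eMat ε' p q -
            ((-1 : k) ^ ((ε * ε').val)) • (eMat ε' p q * eMat ε i j)) =
        ρM (eMat ε i j) ∘ₗ ρM (eMat ε' p q) -
          ((-1 : k) ^ ((ε * ε').val)) • (ρM (eMat ε' p q) ∘ₗ ρM (eMat ε i j))) :
    ∀ (ε : ZMod 2) (i j : Fin n),
      (∑ p : Fin n, ∑ q : Fin n,
          (TensorProduct.map (ρW (etMat 0 p q)) (ρM (eMat 0 q p)) +
           TensorProduct.map (ρW (etMat 1 p q) ∘ₗ sigma k W₀ W₁) (ρM (eMat 1 q p)))) ∘ₗ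
        (TensorProduct.map (ρW (eMat ε i j)) LinearMap.id +
         TensorProduct.map (if ε = 0 then LinearMap.id else sigma k W₀ W₁)
           (ρM (eMat ε i j)))
      =
      (TensorProduct.map (ρW (eMat ε i j)) LinearMap.id +
       TensorProduct.map (if ε = 0 then LinearMap.id else sigma k W₀ W₁)
         (ρM (eMat ε i j))) ∘ₗ
        (∑ p : Fin n, ∑ q : Fin n,
          (TensorProduct.map (ρW (etMat 0 p q)) (ρM (eMat 0 q p)) +
           TensorProduct.map (ρW (etMat 1 p q) ∘ₗ sigma k W₀ W₁) (ρM (eMat 1 q p)))) := by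
  intro ε i j
  rcases CQzmod2_cases ε with hε | hε <;> subst hε
  · -- even generator
    rw [if_pos rfl]
    have hσX : sigma k W₀ W₁ ∘ₗ ρW (eMat 0 i j) = ρW (eMat 0 i j) ∘ₗ sigma k W₀ W₁ :=
      CQeven_sigma_comm (hWeven _ (CQoddPart_eMat0 i j))
    have hW0 : ∀ p q : Fin n,
        ρW (etMat 0 p q) ∘ₗ ρW (eMat 0 i j) - ρW (eMat 0 i j) ∘ₗ ρW (etMat 0 p q)
          = (if q = i then ρW (etMat 0 p j) else 0)
            - (if j = p then ρW (etMat 0 i q) else 0) := by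
      intro p q
      have h := hWrep 0 0 (etMat 0 p q) (eMat 0 i j)
        (CQisHomog_etMat 0 p q) (CQisHomog_eMat 0 i j)
      rw [etMat_mul_eMat, eMat_mul_etMat] at h
      simp only [mul_zero, ZMod.val_zero, pow_zero, one_smul, add_zero, zero_add] at h
      rw [← h]
      split_ifs <;> simp
    have hW1 : ∀ p q : Fin n,
        ρW (etMat 1 p q) ∘ₗ ρW (eMat 0 i j) - ρW (eMat 0 i j) ∘ₗ ρW (etMat 1 p q)
          = (if q = i then ρW (etMat 1 p j) else 0)
            - (if j = p then ρW (etMat 1 i q) else 0) := by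
      intro p q
      have h := hWrep 1 0 (etMat 1 p q) (eMat 0 i j)
        (CQisHomog_etMat 1 p q) (CQisHomog_eMat 0 i j)
      rw [etMat_mul_eMat, eMat_mul_etMat] at h
      simp only [mul_zero, ZMod.val_zero, pow_zero, one_smul, add_zero, zero_add] at h
      rw [← h]
      split_ifs <;> simp
    have hM0 : ∀ q p : Fin n,
        ρM (eMat 0 q p) ∘ₗ ρM (eMat 0 i j) - ρM (eMat 0 i j) ∘ₗ ρM (eMat 0 q p)
          = (if p = i then ρM (eMat 0 q j) else 0)
            - (if j = q then ρM (eMat 0 i p) else 0) := by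
      intro q p
      have h := hMrep 0 0 q p i j
      rw [eMat_mul_eMat, eMat_mul_eMat] at h
      simp only [mul_zero, ZMod.val_zero, pow_zero, one_smul, add_zero, zero_add] at h
      rw [← h]
      split_ifs <;> simp
    have hM1 : ∀ q p : Fin n,
        ρM (eMat 1 q p) ∘ₗ ρM (eMat 0 i j) - ρM (eMat 0 i j) ∘ₗ ρM (eMat 1 q p)
          = (if p = i then ρM (eMat 1 q j) else 0)
            - (if j = q then ρM (eMat 1 i p) else 0) := by
      intro q p
      have h := hMrep 1 0 q p i j
      rw [eMat_mul_eMat, eMat_mul_eMat] at h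
      simp only [mul_zero, ZMod.val_zero, pow_zero, one_smul, add_zero, zero_add] at h
      rw [← h]
      split_ifs <;> simp
    exact CQmain0 i j (sigma k W₀ W₁)
      (fun p q => ρW (etMat 0 p q)) (fun p q => ρW (etMat 1 p q))
      (fun q p => ρM (eMat 0 q p)) (fun q p => ρM (eMat 1 q p))
      (ρW (eMat 0 i j)) (ρM (eMat 0 i j)) hσX hW0 hW1 hM0 hM1
  · -- odd generator
    rw [if_neg (by decide)]
    have hσX : sigma k W₀ W₁ ∘ₗ ρW (eMat 1 i j) = -(ρW (eMat 1 i j) ∘ₗ sigma k W₀ W₁) :=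
      CQodd_sigma_anticomm (hWodd _ (CQevenPart_eMat1 i j))
    have hσA0 : ∀ p q : Fin n,
        sigma k W₀ W₁ ∘ₗ ρW (etMat 0 p q) = ρW (etMat 0 p q) ∘ₗ sigma k W₀ W₁ :=
      fun p q => CQeven_sigma_comm (hWeven _ (CQoddPart_etMat0 p q))
    have hσA1 : ∀ p q : Fin n,
        sigma k W₀ W₁ ∘ₗ ρW (etMat 1 p q) = -(ρW (etMat 1 p q) ∘ₗ sigma k W₀ W₁) :=
      fun p q => CQodd_sigma_anticomm (hWodd _ (CQevenPart_etMat1 p q))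
    have hW0 : ∀ p q : Fin n,
        ρW (etMat 0 p q) ∘ₗ ρW (eMat 1 i j) - ρW (eMat 1 i j) ∘ₗ ρW (etMat 0 p q)
          = -(if q = i then ρW (etMat 1 p j) else 0)
            - (if j = p then ρW (etMat 1 i q) else 0) := by
      intro p q
      have h := hWrep 0 1 (etMat 0 p q) (eMat 1 i j)
        (CQisHomog_etMat 0 p q) (CQisHomog_eMat 1 i j)
      rw [etMat_mul_eMat, eMat_mul_etMat] at h
      simp only [zero_mul, ZMod.val_zero, ZMod.val_one, pow_zero, pow_one, one_smul,
        neg_one_smul, add_zero, zero_add] at h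
      rw [← h]
      split_ifs <;> simp
    have hW1 : ∀ p q : Fin n,
        ρW (etMat 1 p q) ∘ₗ ρW (eMat 1 i j) + ρW (eMat 1 i j) ∘ₗ ρW (etMat 1 p q)
          = -(if q = i then ρW (etMat 0 p j) else 0)
            + (if j = p then ρW (etMat 0 i q) else 0) := by
      intro p q
      have h := hWrep 1 1 (etMat 1 p q) (eMat 1 i j)
        (CQisHomog_etMat 1 p q) (CQisHomog_eMat 1 i j)
      rw [etMat_mul_eMat, eMat_mul_etMat] at h
      have hconv : ρW (etMat 1 p q) ∘ₗ ρW (eMat 1 i j) + ρW (eMat 1 i j) ∘ₗ ρW (etMat 1 p q)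
          = ρW (etMat 1 p q) ∘ₗ ρW (eMat 1 i j)
            - ((-1 : k) ^ (((1 : ZMod 2) * 1).val)) • (ρW (eMat 1 i j) ∘ₗ ρW (etMat 1 p q)) := by
        simp only [mul_one, ZMod.val_one, pow_one]
        module
      rw [hconv, ← h]
      split_ifs <;>
        simp [CQzmod_add, ZMod.val_one, mul_one, pow_one, smul_smul, sub_eq_add_neg]
    have hM0 : ∀ q p : Fin n,
        ρM (eMat 0 q p) ∘ₗ ρM (eMat 1 i j) - ρM (eMat 1 i j) ∘ₗ ρM (eMat 0 q p)
          = (if p = i then ρM (eMat 1 q j) else 0)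
            - (if j = q then ρM (eMat 1 i p) else 0) := by
      intro q p
      have h := hMrep 0 1 q p i j
      rw [eMat_mul_eMat, eMat_mul_eMat] at h
      simp only [zero_mul, ZMod.val_zero, pow_zero, one_smul, add_zero, zero_add] at h
      rw [← h]
      split_ifs <;> simp
    have hM1 : ∀ q p : Fin n,
        ρM (eMat 1 q p) ∘ₗ ρM (eMat 1 i j) + ρM (eMat 1 i j) ∘ₗ ρM (eMat 1 q p)
          = (if p = i then ρM (eMat 0 q j) else 0)
            + (if j = q then ρM (eMat 0 i p) else 0) := by
      intro q p
      have h := hMrep 1 1 q p i j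
      rw [eMat_mul_eMat, eMat_mul_eMat] at h
      have hconv : ρM (eMat 1 q p) ∘ₗ ρM (eMat 1 i j) + ρM (eMat 1 i j) ∘ₗ ρM (eMat 1 q p)
          = ρM (eMat 1 q p) ∘ₗ ρM (eMat 1 i j)
            - ((-1 : k) ^ (((1 : ZMod 2) * 1).val)) • (ρM (eMat 1 i j) ∘ₗ ρM (eMat 1 q p)) := by
        simp only [mul_one, ZMod.val_one, pow_one]
        module
      rw [hconv, ← h]
      split_ifs <;>
        simp [CQzmod_add, ZMod.val_one, mul_one, pow_one, smul_smul, sub_eq_add_neg]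
    exact CQmain1 i j (sigma k W₀ W₁)
      (fun p q => ρW (etMat 0 p q)) (fun p q => ρW (etMat 1 p q))
      (fun q p => ρM (eMat 0 q p)) (fun q p => ρM (eMat 1 q p))
      (ρW (eMat 1 i j)) (ρM (eMat 1 i j)) CQsigma_comp_sigma hσX hσA0 hσA1 hW0 hW1 hM0 hM1

end CasimirQ
end

section
/- Let k have characteristic zero and let T_r ⊂ End(V^{⊗r}) be the image of the Sergeev superalgebra Ser_r acting on V^{⊗r}, where V = k^{n|n} is the natural q(n)-supermodule: Σ_r acts by signed place permutations and c_i acts by applying the odd map c in the i-th tensor factor. If n ≥ r then the representation Ser_r → End_{U(q(n))}(V^{⊗r}) is injective. -/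
namespace SchurWeylSergeev

/-- Index set for the homogeneous basis `v_1,…,v_n` (even) and `v_{1̄},…,v_{n̄}` (odd)
of the natural `q(n)`-supermodule `V = k^{n|n}`. -/
abbrev I (n : ℕ) := Fin n ⊕ Fin n

/-- Parity (as an exponent in `{0,1}`) of a basis index. -/
def par {n : ℕ} : I n → ℕ := Sum.elim (fun _ => 0) (fun _ => 1)

/-- The bar involution `i ↔ ī` on basis indices. -/
def bar {n : ℕ} : I n → I n := Sum.elim Sum.inr Sum.inl

variable (k : Type*) [Field k] (n r : ℕ)

/-- The coordinate model of `V^{⊗r}`: functions on `r`-tuples of basis indices. -/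
abbrev TPow := (Fin r → I n) → k

/-- The diagonal operator multiplying the coordinate at `b` by `g b`. -/
def diag (g : (Fin r → I n) → k) : Module.End k (TPow k n r) :=
  LinearMap.pi fun b => g b • LinearMap.proj b

/-- Barring the `i`-th entry of a tuple of basis indices. -/
def barAt (i : Fin r) (b : Fin r → I n) : Fin r → I n :=
  Function.update b i (bar (b i))

/-- The coefficient of the odd operator `c` applied in the `i`-th tensor factor on the
basis vector `v_{b(0)} ⊗ ⋯ ⊗ v_{b(r-1)}`: the Koszul sign `(-1)^{Σ_{j<i} |v_{b(j)}|}`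
from moving `c` past the first factors, times the structure constant
`(-1)^{|v_{b(i)}|}·√-1` of `c(v_a) = (-1)^{|v_a|} √-1 v_{ā}` (where `s` plays the role
of `√-1`). -/
def cCoeff (s : k) (i : Fin r) (b : Fin r → I n) : k :=
  (-1 : k) ^ (∑ j ∈ Finset.univ.filter (fun j : Fin r => j < i), par (b j)) *
    ((-1 : k) ^ (par (b i)) * s)

/-- The operator `c_i = 1^{⊗(i-1)} ⊗ c ⊗ 1^{⊗(r-i)}` on `V^{⊗r}`, applying the odd map
`c` in the `i`-th tensor factor (with Koszul signs). -/
def Cop (s : k) (i : Fin r) : Module.End k (TPow k n r) :=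
  (diag k n r fun b => cCoeff k n r s i (barAt n r i b)) *
    (LinearMap.funLeft k k (barAt n r i))

/-- The Koszul sign of the signed place permutation `w` acting on the basis vector
indexed by `b`: a factor `(-1)^{|v_{b(p)}||v_{b(q)}|}` for each inversion of `w`. -/
def pSign (w : Equiv.Perm (Fin r)) (b : Fin r → I n) : k :=
  ∏ p : Fin r, ∏ q : Fin r,
    if p < q ∧ w q < w p then (-1 : k) ^ (par (b p) * par (b q)) else 1

/-- The action of `w ∈ Σ_r` on `V^{⊗r}` by signed (graded) place permutation:
`v_{b(0)} ⊗ ⋯ ⟼ ε(w,b) · v_{b(w⁻¹ 0)} ⊗ ⋯`. -/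
def Pop (w : Equiv.Perm (Fin r)) : Module.End k (TPow k n r) :=
  (diag k n r fun b => pSign k n r w (fun t => b (w t))) *
    (LinearMap.funLeft k k fun b : Fin r → I n => fun t => b (w t))

/-- The image of the standard basis element `c_S · w` of the Sergeev superalgebra
`Ser_r = C_r ⊗ kΣ_r` (`S ⊆ {1,…,r}` with the `cᵢ`, `i ∈ S`, taken in increasing
order) under the representation on `V^{⊗r}`. -/
def rep (s : k) (p : Finset (Fin r) × Equiv.Perm (Fin r)) :
    Module.End k (TPow k n r) :=
  ((p.1.sort (· ≤ ·)).map (Cop k n r s)).prod * Pop k n r p.2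

/-! ### Auxiliary material for the proof -/

/-- Delta function (standard basis vector) at a tuple `a`. -/
def delta (a : Fin r → I n) : TPow k n r := fun b => if b = a then 1 else 0

lemma bar_bar {n : ℕ} (x : I n) : bar (bar x) = x := by cases x <;> rfl

lemma par_bar_inl {n : ℕ} (x : Fin n) : bar (Sum.inl x : I n) = Sum.inr x := rfl

lemma barAt_barAt (i : Fin r) (b : Fin r → I n) :
    barAt n r i (barAt n r i b) = b := by
  simp [barAt, Function.update_idem, bar_bar]

lemma Cop_delta (s : k) (i : Fin r) (a : Fin r → I n) :
    Cop k n r s i (delta k n r a) =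
      cCoeff k n r s i a • delta k n r (barAt n r i a) := by
  funext b
  simp only [Cop, Module.End.mul_apply, LinearMap.funLeft_apply, diag, LinearMap.pi_apply,
    LinearMap.smul_apply, LinearMap.proj_apply, Pi.smul_apply, smul_eq_mul, delta]
  by_cases hb : b = barAt n r i a
  · subst hb
    simp [barAt_barAt]
  · have hne : barAt n r i b ≠ a := by
      intro he; apply hb; rw [← he, barAt_barAt]
    simp [hb, hne]

lemma Pop_delta (w : Equiv.Perm (Fin r)) (a : Fin r → I n) :
    Pop k n r w (delta k n r a) =
      pSign k n r w a • delta k n r (fun t => a (w.symm t)) := by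
  funext b
  simp only [Pop, Module.End.mul_apply, LinearMap.funLeft_apply, diag, LinearMap.pi_apply,
    LinearMap.smul_apply, LinearMap.proj_apply, Pi.smul_apply, smul_eq_mul, delta]
  by_cases hb : b = fun t => a (w.symm t)
  · subst hb
    have h1 : (fun t => (fun t => a (w.symm t)) (w t)) = a := by
      funext t; simp
    rw [h1]
    simp
  · have hne : (fun t => b (w t)) ≠ a := by
      intro he; apply hb; funext t; rw [← he]; simp
    simp [hb, hne]

lemma prodCop_delta (s : k) :
    ∀ (l : List (Fin r)), l.Pairwise (· < ·) →
    ∀ (a : Fin r → I n), (∀ j, par (a j) = 0) →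
    ((l.map (Cop k n r s)).prod) (delta k n r a)
      = s ^ l.length • delta k n r (fun j => if j ∈ l then bar (a j) else a j)
  | [], _, a, _ => by simp
  | i :: t, hl, a, ha => by
    have hts : t.Pairwise (· < ·) := (List.pairwise_cons.mp hl).2
    have hit : ∀ x ∈ t, i < x := (List.pairwise_cons.mp hl).1
    set a' : Fin r → I n := fun j => if j ∈ t then bar (a j) else a j with ha'
    have step := prodCop_delta s t hts a ha
    have hlow : ∀ j : Fin r, j < i → a' j = a j := by
      intro j hj
      have hjt : j ∉ t := fun hm => absurd (hit j hm) (not_lt.mpr hj.le)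
      simp [ha', hjt]
    have hii : a' i = a i := by
      have hit' : i ∉ t := fun hm => lt_irrefl i (hit i hm)
      simp [ha', hit']
    have hcoeff : cCoeff k n r s i a' = s := by
      unfold cCoeff
      have h1 : (∑ j ∈ Finset.univ.filter (fun j : Fin r => j < i), par (a' j)) = 0 := by
        apply Finset.sum_eq_zero
        intro j hj
        rw [hlow j (Finset.mem_filter.mp hj).2]
        exact ha j
      rw [h1, hii, ha i]
      ring
    have hbar : barAt n r i a' = fun j => if j ∈ i :: t then bar (a j) else a j := by
      funext j
      by_cases hj : j = i
      · subst hj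
        simp [barAt, hii]
      · simp [barAt, Function.update_of_ne hj, ha', List.mem_cons, hj]
    rw [List.map_cons, List.prod_cons, Module.End.mul_apply, step, map_smul,
      Cop_delta, hcoeff, hbar, smul_smul, ← pow_succ, List.length_cons]

/-- The all-even base tuple. -/
def b0 (h : r ≤ n) : Fin r → I n := fun j => Sum.inl (Fin.castLE h j)

/-- The tuple indexing the image of `δ_{b₀}` under `rep (S, w)`. -/
def tupleOf (h : r ≤ n) (p : Finset (Fin r) × Equiv.Perm (Fin r)) : Fin r → I n :=
  fun j => if j ∈ p.1 then bar (b0 n r h (p.2.symm j)) else b0 n r h (p.2.symm j)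

lemma rep_delta (s : k) (h : r ≤ n) (p : Finset (Fin r) × Equiv.Perm (Fin r)) :
    rep k n r s p (delta k n r (b0 n r h)) =
      s ^ p.1.card • delta k n r (tupleOf n r h p) := by
  unfold rep
  rw [Module.End.mul_apply, Pop_delta]
  have hps : pSign k n r p.2 (b0 n r h) = 1 := by
    unfold pSign
    refine Finset.prod_eq_one fun x _ => Finset.prod_eq_one fun y _ => ?_
    split <;> simp [b0, par]
  rw [hps, one_smul]
  have key := prodCop_delta k n r s (p.1.sort (· ≤ ·)) (Finset.sortedLT_sort p.1).pairwise
    (fun t => b0 n r h (p.2.symm t)) (fun j => rfl)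
  rw [key, Finset.length_sort]
  have hfun : (fun j => if j ∈ Finset.sort p.1 (fun x1 x2 => x1 ≤ x2)
      then bar ((fun t => b0 n r h (p.2.symm t)) j)
      else (fun t => b0 n r h (p.2.symm t)) j) = tupleOf n r h p := by
    funext j
    simp [tupleOf, Finset.mem_sort]
  rw [hfun]

lemma tupleOf_inj (h : r ≤ n) : Function.Injective (tupleOf n r h) := by
  intro p q hpq
  have h1 : ∀ j, (j ∈ p.1 ↔ j ∈ q.1) := by
    intro j
    have hj := congrArg Sum.isRight (congrFun hpq j)
    by_cases hp : j ∈ p.1 <;> by_cases hq : j ∈ q.1 <;>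
      simp [tupleOf, hp, hq, b0, bar] at hj <;> tauto
  have h2 : ∀ j, p.2.symm j = q.2.symm j := by
    intro j
    have hj := congrArg (Sum.elim id id) (congrFun hpq j)
    apply Fin.castLE_injective h
    by_cases hp : j ∈ p.1 <;> by_cases hq : j ∈ q.1 <;>
      simpa [tupleOf, hp, hq, b0, bar] using hj
  have e1 : p.1 = q.1 := Finset.ext fun j => h1 j
  have e2 : p.2 = q.2 := by
    have : p.2.symm = q.2.symm := Equiv.ext h2
    simpa using congrArg Equiv.symm this
  exact Prod.ext e1 e2

/-- over a field `k` of characteristic zero, if `n ≥ r` then the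
representation `Ser_r → End_{U(q(n))}(V^{⊗r})` of the Sergeev superalgebra (the
symmetric group acting by signed place permutations, `cᵢ` by the odd map `c` in the
`i`-th factor) is injective.  Equivalently (as formalized here), the images of the
standard basis elements `c_S · w` of `Ser_r` are linearly independent in
`End(V^{⊗r})`. -/
theorem sergeev_representation_injective
    [CharZero k] (s : k) (hs : s ^ 2 = -1) (h : r ≤ n) :
    LinearIndependent k
      (fun p : Finset (Fin r) × Equiv.Perm (Fin r) => rep k n r s p) := by
  have hs0 : s ≠ 0 := by
    rintro rfl
    rw [show ((0 : k) ^ 2 = 0) by ring] at hs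
    exact one_ne_zero (neg_injective (by simpa using hs.symm) : (1 : k) = 0)
  rw [Fintype.linearIndependent_iff]
  intro g hg p
  have happ := congrFun (congrArg
    (fun f : Module.End k (TPow k n r) => f (delta k n r (b0 n r h))) hg)
    (tupleOf n r h p)
  simp only [LinearMap.sum_apply, LinearMap.smul_apply, LinearMap.zero_apply,
    Finset.sum_apply, Pi.smul_apply, Pi.zero_apply, smul_eq_mul,
    rep_delta k n r s h] at happ
  rw [Finset.sum_eq_single p] at happ
  · simp [delta] at happ
    rcases happ with h1 | ⟨h1, -⟩
    · exact h1
    · exact absurd h1 hs0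
  · intro q _ hq
    have hne : tupleOf n r h p ≠ tupleOf n r h q :=
      fun e => hq (tupleOf_inj n r h e).symm
    simp [delta, hne]
  · intro hp
    exact absurd (Finset.mem_univ p) hp

end SchurWeylSergeev
end
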